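/- Let x ∈ {0,1}^N with N = 2^n, and let {(i_k, j_k)}_{k=1}^{N/4} be disjoint pairs of distinct indices in {1,…,N}, w ∈ {0,1}^{N/4}, and suppose there is b ∈ {0,1} with w_k ⊕ x_{i_k} ⊕ x_{j_k} = b for all k. Let |ψ⟩ = N^{−1/2} Σᵢ (−1)^{xᵢ} |i⟩, let P be the orthogonal projector onto the span of N/4 standard basis vectors |i⟩ with i not appearing in any pair, and let Π = P + Σ_k (1/2)(|i_k⟩ − (−1)^{w_k}|j_k⟩)(⟨i_k| − (−1)^{w_k}⟨j_k|). Then ⟨ψ|Π|ψ⟩ = (1 + 2b)/4. -/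

import Mathlib

open Matrix
open scoped Classical

noncomputable section

/-- Sign vector `ψ = N^{-1/2} Σᵢ (−1)^{xᵢ} |i⟩`. -/
def psiVec (N : ℕ) (x : Fin N → Bool) : Fin N → ℂ :=
  fun a => (if x a then (-1 : ℂ) else 1) / Real.sqrt N

/-- The (unnormalized) vector `|i_k⟩ − (−1)^{w_k}|j_k⟩`. -/
def pairVec {N M : ℕ} (i j : Fin M → Fin N) (w : Fin M → Bool) (k : Fin M) :
    Fin N → ℂ :=
  fun a => (if a = i k then (1 : ℂ) else 0) -
    (if w k then (-1 : ℂ) else 1) * (if a = j k then (1 : ℂ) else 0)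

/-- Projector `P` onto the span of the standard basis vectors `|S k⟩`. -/
def basisProj {N M : ℕ} (S : Fin M → Fin N) : Matrix (Fin N) (Fin N) ℂ :=
  Matrix.of fun a b => if a = b ∧ (∃ k, S k = a) then (1 : ℂ) else 0

/-- The projector `Π = P + Σ_k (1/2)(|i_k⟩−(−1)^{w_k}|j_k⟩)(⟨i_k|−(−1)^{w_k}⟨j_k|)`. -/
def matchingProj {N M : ℕ} (i j : Fin M → Fin N) (w : Fin M → Bool)
    (S : Fin M → Fin N) : Matrix (Fin N) (Fin N) ℂ :=
  basisProj S + ∑ k, (1/2 : ℂ) •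
    Matrix.of (fun a b => pairVec i j w k a * (starRingEnd ℂ) (pairVec i j w k b))

lemma outer_quad {N : ℕ} (v ψ : Fin N → ℂ) :
    star ψ ⬝ᵥ (Matrix.of (fun a b => v a * (starRingEnd ℂ) (v b)) *ᵥ ψ) =
      (∑ a, (starRingEnd ℂ) (ψ a) * v a) * (∑ c, (starRingEnd ℂ) (v c) * ψ c) := by
  rw [Finset.sum_mul_sum]
  simp only [Matrix.mulVec, dotProduct, Pi.star_apply, Matrix.of_apply,
    Finset.mul_sum]
  refine Finset.sum_congr rfl fun a _ => Finset.sum_congr rfl fun c _ => ?_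
  simp [RCLike.star_def]
  ring

lemma pair_dot {N M : ℕ} (i j : Fin M → Fin N) (w : Fin M → Bool) (k : Fin M)
    (ψ : Fin N → ℂ) :
    (∑ c, (starRingEnd ℂ) (pairVec i j w k c) * ψ c) =
      ψ (i k) - (if w k then (-1 : ℂ) else 1) * ψ (j k) := by
  simp [pairVec, sub_mul, Finset.sum_sub_distrib, ite_mul, apply_ite (starRingEnd ℂ),
    _root_.map_one, map_neg, mul_ite, neg_mul, mul_assoc, Finset.sum_ite_eq']

lemma pair_dot' {N M : ℕ} (i j : Fin M → Fin N) (w : Fin M → Bool) (k : Fin M)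
    (ψ : Fin N → ℂ) :
    (∑ a, (starRingEnd ℂ) (ψ a) * pairVec i j w k a) =
      (starRingEnd ℂ) (ψ (i k)) - (if w k then (-1 : ℂ) else 1) * (starRingEnd ℂ) (ψ (j k)) := by
  simp [pairVec, mul_sub, Finset.sum_sub_distrib, mul_ite, mul_one, mul_zero,
    Finset.sum_ite_eq', ite_mul, neg_mul, one_mul, zero_mul, Finset.sum_ite_eq,
    mul_neg]

/-- For the partial-matching instance with promise bit `b`,
`⟨ψ|Π|ψ⟩ = (1 + 2b)/4`. -/
theorem matching_expectation (n : ℕ) (hn : 2 ≤ n)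
    (x : Fin (2^n) → Bool)
    (i j : Fin (2^(n-2)) → Fin (2^n))
    (hpairs : Function.Injective (Sum.elim i j))
    (w : Fin (2^(n-2)) → Bool)
    (S : Fin (2^(n-2)) → Fin (2^n))
    (hS : Function.Injective S)
    (hSdisj : ∀ k l, S k ≠ i l ∧ S k ≠ j l)
    (b : Bool)
    (hmatch : ∀ k, xor (w k) (xor (x (i k)) (x (j k))) = b) :
    star (psiVec (2^n) x) ⬝ᵥ (matchingProj i j w S *ᵥ psiVec (2^n) x) =
      (1 + 2 * (if b then (1 : ℂ) else 0)) / 4 := by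
  classical
  have hsq : ((Real.sqrt ((2:ℝ)^n) : ℝ) : ℂ) * ((Real.sqrt ((2:ℝ)^n) : ℝ) : ℂ) = (2:ℂ)^n := by
    rw [← Complex.ofReal_mul, Real.mul_self_sqrt (by positivity)]
    push_cast; ring
  have h2ne : ((2:ℂ)^n) ≠ 0 := pow_ne_zero _ two_ne_zero
  set ψ : Fin (2^n) → ℂ := psiVec (2^n) x with hψdef
  -- norm of entries
  have hnorm : ∀ a, (starRingEnd ℂ) (ψ a) * ψ a = 1 / (2:ℂ)^n := by
    intro a
    cases hxa : x a <;>
      simp [hψdef, psiVec, hxa, map_div₀, Complex.conj_ofReal] <;>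
      field_simp <;> push_cast <;> linear_combination -hsq
  -- value of the pair factors
  have key : ∀ k : Fin (2^(n-2)),
      ((starRingEnd ℂ) (ψ (i k)) - (if w k then (-1:ℂ) else 1) * (starRingEnd ℂ) (ψ (j k)))
        * (ψ (i k) - (if w k then (-1:ℂ) else 1) * ψ (j k)) =
      if b then 4 / (2:ℂ)^n else 0 := by
    intro k
    have hm := hmatch k
    cases b <;>
      cases hw : w k <;> cases hxi : x (i k) <;> cases hxj : x (j k) <;>
      simp [hw, hxi, hxj] at hm ⊢ <;>
      simp [hψdef, psiVec, hxi, hxj, map_div₀, Complex.conj_ofReal] <;>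
      field_simp <;> push_cast <;> ring_nf <;>
      linear_combination (-4:ℂ) * hsq
  -- the basisProj term
  have T0 : star ψ ⬝ᵥ (basisProj S *ᵥ ψ) = ((2:ℂ)^(n-2)) / (2:ℂ)^n := by
    have hmv : ∀ a, (basisProj S *ᵥ ψ) a = if (∃ k, S k = a) then ψ a else 0 := by
      intro a
      simp only [basisProj, Matrix.mulVec, dotProduct, Matrix.of_apply]
      by_cases hP : ∃ k, S k = a
      · simp [hP, Finset.sum_ite_eq]
      · simp [hP]
    calc star ψ ⬝ᵥ (basisProj S *ᵥ ψ)
        = ∑ a, if (∃ k, S k = a) then (starRingEnd ℂ) (ψ a) * ψ a else 0 := by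
          simp only [dotProduct, Pi.star_apply, RCLike.star_def]
          refine Finset.sum_congr rfl fun a _ => ?_
          rw [hmv a]; split <;> simp
      _ = ∑ a, if (∃ k, S k = a) then 1 / (2:ℂ)^n else 0 := by
          refine Finset.sum_congr rfl fun a _ => ?_
          split <;> simp [hnorm a]
      _ = ∑ a ∈ Finset.univ.filter (fun a => ∃ k, S k = a), 1 / (2:ℂ)^n := by
          rw [Finset.sum_filter]
      _ = ((Finset.univ.filter (fun a => ∃ k, S k = a)).card : ℂ) * (1 / (2:ℂ)^n) := by
          rw [Finset.sum_const, nsmul_eq_mul]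
      _ = ((2:ℂ)^(n-2)) / (2:ℂ)^n := by
          have hfc : (Finset.univ.filter (fun a => ∃ k, S k = a)) = Finset.univ.image S := by
            ext a; simp [eq_comm]
          rw [hfc, Finset.card_image_of_injective _ hS]
          simp
          push_cast
          ring
  -- the pair terms
  have Tk : ∀ k : Fin (2^(n-2)),
      star ψ ⬝ᵥ ((Matrix.of fun a c => pairVec i j w k a * (starRingEnd ℂ) (pairVec i j w k c)) *ᵥ ψ)
        = if b then 4 / (2:ℂ)^n else 0 := by
    intro k
    rw [outer_quad, pair_dot, pair_dot']
    exact key k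
  -- assemble
  have sum_mv : ∀ (f : Fin (2^(n-2)) → Matrix (Fin (2^n)) (Fin (2^n)) ℂ),
      (∑ k, f k) *ᵥ ψ = ∑ k, (f k *ᵥ ψ) := by
    intro f
    funext a
    simp only [Matrix.mulVec, dotProduct, Finset.sum_apply, Matrix.sum_apply,
      Finset.sum_mul]
    exact Finset.sum_comm
  have dot_sum : ∀ (u : Fin (2^(n-2)) → (Fin (2^n) → ℂ)),
      star ψ ⬝ᵥ (∑ k, u k) = ∑ k, star ψ ⬝ᵥ u k := by
    intro u
    simp only [dotProduct, Finset.sum_apply, Finset.mul_sum]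
    exact Finset.sum_comm
  have expand : star ψ ⬝ᵥ (matchingProj i j w S *ᵥ ψ)
      = star ψ ⬝ᵥ (basisProj S *ᵥ ψ)
        + ∑ k, (1/2 : ℂ) * (star ψ ⬝ᵥ ((Matrix.of fun a c => pairVec i j w k a * (starRingEnd ℂ) (pairVec i j w k c)) *ᵥ ψ)) := by
    rw [matchingProj, Matrix.add_mulVec, dotProduct_add, sum_mv, dot_sum]
    congr 1
    refine Finset.sum_congr rfl fun k _ => ?_
    rw [Matrix.smul_mulVec, dotProduct_smul, smul_eq_mul]
  rw [expand, T0]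
  simp only [Tk]
  rw [Finset.sum_const, nsmul_eq_mul]
  have hcard : ((Finset.univ : Finset (Fin (2^(n-2)))).card : ℂ) = (2:ℂ)^(n-2) := by
    push_cast [Finset.card_univ, Fintype.card_fin]
    ring
  rw [hcard]
  have hpow : (2:ℂ)^n = 4 * (2:ℂ)^(n-2) := by
    have h2 : n - 2 + 2 = n := by omega
    calc (2:ℂ)^n = (2:ℂ)^(n-2+2) := by rw [h2]
    _ = 4 * (2:ℂ)^(n-2) := by rw [pow_add]; ring
  have hM : ((2:ℂ)^(n-2)) ≠ 0 := pow_ne_zero _ two_ne_zero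
  cases b <;> simp <;> rw [hpow] <;> field_simp <;> ring

end
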